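/- arXiv:2211.11997 — 2 statements merged into one kernel-verified Lean document; each statement's English description precedes it below -/
import Mathlib

section
/- Let Z = <c, G> be a zonotope in R^n with sliceable generators g_1,...,g_m as above (each g_k is the unique generator with nonzero entry in coordinate n−m+k). If x ∈ Z is a point whose last m coordinates equal q ∈ R^m, then x ∈ slice(Z, q), where slice(Z, q) = <c + Σ_{k=1}^m σ_k g_k, [g_{m+1},...,g_ℓ]> with σ_k = (q_k − c_{n−m+k})/[g_k]_{n−m+k}. -/
/-- The zonotope with center `c` and generators `G k`. -/
def zono {n : ℕ} {ι : Type} [Fintype ι] (c : Fin n → ℝ) (G : ι → Fin n → ℝ) :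
    Set (Fin n → ℝ) :=
  {x | ∃ β : ι → ℝ, (∀ k, β k ∈ Set.Icc (-1 : ℝ) 1) ∧ x = c + ∑ k, β k • G k}

/-- If `x` lies in a zonotope `⟨c, [g₁, g₂]⟩ ⊂ ℝ^(d+m)` whose sliceable generators `g₁`
are the unique generators with nonzero entries in the last `m` coordinates, and the last
`m` coordinates of `x` equal `q`, then `x` lies in the sliced zonotope
`⟨c + Σ σ k • g₁ k, g₂⟩` with `σ k = (q k − c_{n−m+k}) / [g₁ k]_{n−m+k}`. -/
theorem mem_slice_of_mem {d m ℓ' : ℕ} (c : Fin (d + m) → ℝ)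
    (g₁ : Fin m → Fin (d + m) → ℝ) (g₂ : Fin ℓ' → Fin (d + m) → ℝ)
    (hnz : ∀ k : Fin m, g₁ k (Fin.natAdd d k) ≠ 0)
    (huniq₁ : ∀ k j : Fin m, j ≠ k → g₁ j (Fin.natAdd d k) = 0)
    (huniq₂ : ∀ (k : Fin m) (j : Fin ℓ'), g₂ j (Fin.natAdd d k) = 0)
    (q : Fin m → ℝ) (x : Fin (d + m) → ℝ)
    (hx : x ∈ zono c (Sum.elim g₁ g₂))
    (hq : ∀ k : Fin m, x (Fin.natAdd d k) = q k) :
    x ∈ zono (c + ∑ k, ((q k - c (Fin.natAdd d k)) / g₁ k (Fin.natAdd d k)) • g₁ k) g₂ := by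
  obtain ⟨β, hβ, hxeq⟩ := hx
  -- coefficient of g₁ k is determined
  have hcoef : ∀ k : Fin m, β (Sum.inl k) = (q k - c (Fin.natAdd d k)) / g₁ k (Fin.natAdd d k) := by
    intro k
    have hxk := congrFun hxeq (Fin.natAdd d k)
    simp only [Pi.add_apply, Finset.sum_apply, Pi.smul_apply, smul_eq_mul] at hxk
    rw [Fintype.sum_sum_type] at hxk
    have h2 : ∀ j : Fin ℓ', β (Sum.inr j) * Sum.elim g₁ g₂ (Sum.inr j) (Fin.natAdd d k) = 0 := by
      intro j; simp [huniq₂ k j]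
    rw [Finset.sum_congr rfl (fun j _ => h2 j), Finset.sum_const, smul_zero] at hxk
    have h1 : (∑ j : Fin m, β (Sum.inl j) * Sum.elim g₁ g₂ (Sum.inl j) (Fin.natAdd d k))
        = β (Sum.inl k) * g₁ k (Fin.natAdd d k) := by
      rw [Finset.sum_eq_single k]
      · rfl
      · intro j _ hj; simp [huniq₁ k j hj]
      · simp
    rw [h1, hq k] at hxk
    rw [eq_div_iff (hnz k)]
    linarith [hxk]
  refine ⟨fun j => β (Sum.inr j), fun j => hβ (Sum.inr j), ?_⟩
  rw [hxeq, Fintype.sum_sum_type]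
  have : (∑ k : Fin m, β (Sum.inl k) • Sum.elim g₁ g₂ (Sum.inl k))
      = ∑ k, ((q k - c (Fin.natAdd d k)) / g₁ k (Fin.natAdd d k)) • g₁ k := by
    refine Finset.sum_congr rfl fun k _ => ?_
    rw [hcoef k]; rfl
  rw [this]
  abel
end

section
/- Consider u : [t₀, ∞) → R continuously differentiable with u̇(t) = −K u(t) − (κ(t) M + φ(t)) u(t) + Δ(t), where K > 0, κ(t) ≥ κ₁ > 0, φ(t) ≥ φ₁ > 0, and |Δ(t)| ≤ b_pro·u(t) + b_off for u(t) ∈ [0, u_cri], with constants satisfying q := b_off²/(4(κ₁ M + φ₁ − b_pro)) < (0.15)² K and κ₁ M + φ₁ > b_pro. Then for V(t) = (1/2) u(t)², whenever u(t) ∈ [0.15, u_cri] we have V̇(t) ≤ −K u(t)² + q < −K(u(t)² − 0.15²) ≤ 0. In particular, if u(t₀) ∈ (0.15, u_cri], then u decreases monotonically until it reaches 0.15, and the time t_b' at which u first equals 0.15 satisfies t_b' ≤ t₀ + (u(t₀)² − 0.15²)/(2·0.15²·K − 2q). -/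
set_option maxHeartbeats 1600000 in
/-- For `u̇ = −K u − (κ M + φ) u + Δ` with `|Δ t| ≤ b_pro·u t + b_off` when
`u t ∈ [0, u_cri]`, `κ₁ M + φ₁ > b_pro` and `q := b_off²/(4(κ₁ M + φ₁ − b_pro)) <
0.15² K`: whenever `u t ∈ [0.15, u_cri]`, `V̇ = u·u̇ ≤ −K u² + q < −K(u² − 0.15²)`;
and if `u t₀ ∈ (0.15, u_cri]` then `u` first reaches `0.15` at some time
`t_b' ≤ t₀ + (u t₀² − 0.15²)/(2·0.15²·K − 2q)`. -/
theorem longitudinal_speed_decrease (t₀ K M κ₁ φ₁ bpro boff ucri : ℝ)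
    (u κ φ Δ : ℝ → ℝ)
    (hK : 0 < K) (hM : 0 < M) (hκ₁ : 0 < κ₁) (hφ₁ : 0 < φ₁)
    (hbpro : 0 < bpro) (hboff : 0 < boff) (hucri : 0.15 < ucri)
    (hden : bpro < κ₁ * M + φ₁)
    (hq : boff ^ 2 / (4 * (κ₁ * M + φ₁ - bpro)) < 0.15 ^ 2 * K)
    (hκ : ∀ t, t₀ ≤ t → κ₁ ≤ κ t)
    (hφ : ∀ t, t₀ ≤ t → φ₁ ≤ φ t)
    (hΔ : ∀ t, t₀ ≤ t → u t ∈ Set.Icc 0 ucri → |Δ t| ≤ bpro * u t + boff)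
    (hode : ∀ t, t₀ ≤ t →
      HasDerivAt u (-K * u t - (κ t * M + φ t) * u t + Δ t) t) :
    (∀ t, t₀ ≤ t → u t ∈ Set.Icc 0.15 ucri →
      u t * (-K * u t - (κ t * M + φ t) * u t + Δ t) ≤
          -K * (u t) ^ 2 + boff ^ 2 / (4 * (κ₁ * M + φ₁ - bpro)) ∧
        -K * (u t) ^ 2 + boff ^ 2 / (4 * (κ₁ * M + φ₁ - bpro)) <
          -K * ((u t) ^ 2 - 0.15 ^ 2) ∧
        -K * ((u t) ^ 2 - 0.15 ^ 2) ≤ 0) ∧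
    (u t₀ ∈ Set.Ioc 0.15 ucri →
      ∃ tb', t₀ ≤ tb' ∧
        tb' ≤ t₀ + ((u t₀) ^ 2 - 0.15 ^ 2) /
          (2 * 0.15 ^ 2 * K - 2 * (boff ^ 2 / (4 * (κ₁ * M + φ₁ - bpro)))) ∧
        u tb' = 0.15 ∧ StrictAntiOn u (Set.Icc t₀ tb')) := by
  have hc : (0:ℝ) < κ₁ * M + φ₁ - bpro := by linarith
  set c : ℝ := κ₁ * M + φ₁ - bpro with hc_def
  clear_value c
  set q : ℝ := boff ^ 2 / (4 * c) with hq_def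
  clear_value q
  have hq0 : 0 < q := by rw [hq_def]; positivity
  -- key pointwise bound
  have key : ∀ t, t₀ ≤ t → u t ∈ Set.Icc 0.15 ucri →
      u t * (-K * u t - (κ t * M + φ t) * u t + Δ t) ≤ -K * (u t) ^ 2 + q := by
    intro t ht hmem
    obtain ⟨h1, h2⟩ := hmem
    have hu0 : (0:ℝ) < u t := lt_of_lt_of_le (by norm_num) h1
    have hΔt := hΔ t ht ⟨hu0.le, h2⟩
    have hκt := hκ t ht
    have hφt := hφ t ht
    have habs : Δ t ≤ bpro * u t + boff := (abs_le.mp hΔt).2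
    have hsq : 0 ≤ (boff - 2 * c * u t) ^ 2 := sq_nonneg _
    have hstep : boff * u t - c * u t ^ 2 ≤ q := by
      rw [hq_def, le_div_iff₀ (by positivity : (0:ℝ) < 4 * c)]
      nlinarith [hsq]
    nlinarith [mul_le_mul_of_nonneg_left habs hu0.le,
      mul_nonneg (mul_nonneg (sub_nonneg.2 hκt) hM.le) (sq_nonneg (u t)),
      mul_nonneg (sub_nonneg.2 hφt) (sq_nonneg (u t)), hstep]
  have part1 : ∀ t, t₀ ≤ t → u t ∈ Set.Icc 0.15 ucri →
      u t * (-K * u t - (κ t * M + φ t) * u t + Δ t) ≤ -K * (u t) ^ 2 + q ∧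
        -K * (u t) ^ 2 + q < -K * ((u t) ^ 2 - 0.15 ^ 2) ∧
        -K * ((u t) ^ 2 - 0.15 ^ 2) ≤ 0 := by
    intro t ht hmem
    refine ⟨key t ht hmem, by linarith, ?_⟩
    have h1 := hmem.1
    have hsq : (0.15:ℝ) ^ 2 ≤ u t ^ 2 := by nlinarith [sq_nonneg (u t - 0.15)]
    nlinarith [mul_nonneg hK.le (sub_nonneg.2 hsq)]
  -- derivative negative on region
  have hderiv_neg : ∀ t, t₀ ≤ t → u t ∈ Set.Icc 0.15 ucri →
      (-K * u t - (κ t * M + φ t) * u t + Δ t) < 0 := by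
    intro t ht hmem
    have hu0 : (0:ℝ) < u t := lt_of_lt_of_le (by norm_num) hmem.1
    have h := key t ht hmem
    have h2 : -K * (u t) ^ 2 + q < -K * ((u t) ^ 2 - 0.15 ^ 2) := by linarith
    have hsq : (0.15:ℝ) ^ 2 ≤ u t ^ 2 := by nlinarith [hmem.1, sq_nonneg (u t - 0.15)]
    have h3 : -K * ((u t) ^ 2 - 0.15 ^ 2) ≤ 0 := by
      nlinarith [mul_nonneg hK.le (sub_nonneg.2 hsq)]
    nlinarith
  have hcont : ∀ t, t₀ ≤ t → ContinuousAt u t := fun t ht => (hode t ht).continuousAt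
  refine ⟨part1, ?_⟩
  rintro ⟨hstart1, hstart2⟩
  -- derivative-negative implies decrease just after any point in region
  have hdrop : ∀ s, t₀ ≤ s → u s ∈ Set.Icc 0.15 ucri → ∀ r, s < r →
      ∃ s', s < s' ∧ s' ≤ r ∧ u s' < u s := by
    intro s hs hmem r hr
    have hslope := hasDerivAt_iff_tendsto_slope.mp (hode s hs)
    have hslope' : Filter.Tendsto (slope u s) (nhdsWithin s (Set.Ioi s))
        (nhds (-K * u s - (κ s * M + φ s) * u s + Δ s)) :=
      hslope.mono_left (nhdsWithin_mono _ (fun x hx => ne_of_gt hx))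
    have hev : ∀ᶠ x in nhdsWithin s (Set.Ioi s), slope u s x < 0 :=
      hslope'.eventually_lt_const (hderiv_neg s hs hmem)
    have hev2 : Set.Ioc s r ∈ nhdsWithin s (Set.Ioi s) :=
      Ioc_mem_nhdsGT_of_mem ⟨le_refl s, hr⟩
    obtain ⟨x, hx1, hx2⟩ := ((hev.and (Filter.eventually_of_mem hev2 (fun x hx => hx))).exists)
    refine ⟨x, hx2.1, hx2.2, ?_⟩
    have hxs : 0 < x - s := by linarith [hx2.1]
    rw [slope_def_field] at hx1
    have h := mul_neg_of_neg_of_pos hx1 hxs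
    rw [div_mul_cancel₀ _ (ne_of_gt hxs)] at h
    linarith
  -- invariance: u stays ≤ ucri
  have hinv : ∀ t, t₀ ≤ t → u t ≤ ucri := by
    intro t ht
    by_contra hgt
    push_neg at hgt
    have htt : t₀ < t := by
      rcases eq_or_lt_of_le ht with h | h
      · exact absurd (h ▸ hstart2) (not_le.mpr hgt)
      · exact h
    set F : Set ℝ := Set.Icc t₀ t ∩ u ⁻¹' Set.Iic ucri with hF_def
    have hcontOn : ContinuousOn u (Set.Icc t₀ t) :=
      fun s hs => (hcont s hs.1).continuousWithinAt
    have hFclosed : IsClosed F :=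
      hcontOn.preimage_isClosed_of_isClosed isClosed_Icc isClosed_Iic
    have hFne : F.Nonempty := ⟨t₀, ⟨le_refl _, ht⟩, hstart2⟩
    have hFbdd : BddAbove F := ⟨t, fun s hs => hs.1.2⟩
    set s₁ := sSup F with hs₁_def
    clear_value s₁
    have hs₁F : s₁ ∈ F := hs₁_def ▸ hFclosed.csSup_mem hFne hFbdd
    have hs₁le : u s₁ ≤ ucri := hs₁F.2
    have hs₁t0 : t₀ ≤ s₁ := hs₁F.1.1
    have hs₁t : s₁ < t := lt_of_le_of_ne hs₁F.1.2 (fun h => by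
      rw [h] at hs₁le; exact absurd hs₁le (not_le.mpr hgt))
    have hafter : ∀ s, s₁ < s → s ≤ t → ucri < u s := by
      intro s hs hst
      by_contra hle
      push_neg at hle
      have : s ∈ F := ⟨⟨le_trans hs₁t0 hs.le, hst⟩, hle⟩
      exact absurd (hs₁_def ▸ le_csSup hFbdd this) (not_le.mpr hs)
    -- u s₁ = ucri via right continuity
    have hge : ucri ≤ u s₁ := by
      have htend : Filter.Tendsto u (nhdsWithin s₁ (Set.Ioi s₁)) (nhds (u s₁)) :=
        ((hcont s₁ hs₁t0).continuousWithinAt)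
      refine ge_of_tendsto htend ?_
      refine Filter.eventually_of_mem (Ioc_mem_nhdsGT_of_mem ⟨le_refl s₁, hs₁t⟩) ?_
      intro x hx
      exact (hafter x hx.1 hx.2).le
    have heq : u s₁ = ucri := le_antisymm hs₁le hge
    have hmem : u s₁ ∈ Set.Icc 0.15 ucri := ⟨by rw [heq]; exact hucri.le, hs₁le⟩
    obtain ⟨s', hs'1, hs'2, hs'3⟩ := hdrop s₁ hs₁t0 hmem t hs₁t
    exact absurd hs'3 (not_lt.mpr (by rw [heq]; exact (hafter s' hs'1 hs'2).le))
  set d : ℝ := 2 * 0.15 ^ 2 * K - 2 * q with hd_def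
  clear_value d
  have hd : 0 < d := by rw [hd_def]; linarith
  set T : ℝ := t₀ + ((u t₀) ^ 2 - 0.15 ^ 2) / d with hT_def
  clear_value T
  have hu0sq : 0.15 ^ 2 < (u t₀) ^ 2 :=
    pow_lt_pow_left₀ hstart1 (by norm_num) two_ne_zero
  have hT0 : t₀ < T := by
    rw [hT_def]
    have : 0 < ((u t₀) ^ 2 - 0.15 ^ 2) / d := div_pos (by linarith) hd
    linarith
  -- u hits 0.15 by time T
  have hhit : ∃ s ∈ Set.Icc t₀ T, u s ≤ 0.15 := by
    by_contra hno
    push_neg at hno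
    have hmem' : ∀ s ∈ Set.Icc t₀ T, u s ∈ Set.Icc 0.15 ucri :=
      fun s hs => ⟨(hno s hs).le, hinv s hs.1⟩
    have hg : ∀ s ∈ Set.Icc t₀ T, HasDerivAt (fun x => (u x) ^ 2 + d * x)
        (2 * u s * (-K * u s - (κ s * M + φ s) * u s + Δ s) + d) s := by
      intro s hs
      have h1 := ((hode s hs.1).pow 2)
      have h2 : HasDerivAt (fun x : ℝ => d * x) d s := by
        simpa using (hasDerivAt_id s).const_mul d
      have := h1.add h2
      refine this.congr_deriv ?_
      push_cast; ring
    have hganti : AntitoneOn (fun x => (u x) ^ 2 + d * x) (Set.Icc t₀ T) := by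
      apply antitoneOn_of_deriv_nonpos (convex_Icc _ _)
      · exact fun s hs => ((hg s hs).continuousAt).continuousWithinAt
      · intro s hs
        rw [interior_Icc] at hs
        exact ((hg s (Set.mem_Icc_of_Ioo hs)).differentiableAt).differentiableWithinAt
      · intro s hs
        rw [interior_Icc] at hs
        have hsIcc := Set.mem_Icc_of_Ioo hs
        rw [(hg s hsIcc).deriv]
        have hk := key s hsIcc.1 (hmem' s hsIcc)
        have hu15 : 0.15 ≤ u s := (hmem' s hsIcc).1
        have hsq15 : (0.15:ℝ) ^ 2 ≤ u s ^ 2 := by nlinarith [sq_nonneg (u s - 0.15)]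
        have := mul_le_mul_of_nonneg_left hsq15 hK.le
        linarith [hk]
    have hle := hganti (Set.left_mem_Icc.mpr hT0.le) (Set.right_mem_Icc.mpr hT0.le) hT0.le
    simp only at hle
    have hTsub : d * (T - t₀) = (u t₀) ^ 2 - 0.15 ^ 2 := by
      rw [hT_def]
      field_simp
      ring
    have huT : 0.15 < u T := hno T (Set.right_mem_Icc.mpr hT0.le)
    nlinarith [hle, hTsub, huT]
  set E : Set ℝ := Set.Icc t₀ T ∩ u ⁻¹' Set.Iic 0.15 with hE_def
  have hcontOn : ContinuousOn u (Set.Icc t₀ T) :=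
    fun s hs => (hcont s hs.1).continuousWithinAt
  have hEclosed : IsClosed E :=
    hcontOn.preimage_isClosed_of_isClosed isClosed_Icc isClosed_Iic
  obtain ⟨s₀, hs₀1, hs₀2⟩ := hhit
  have hEne : E.Nonempty := ⟨s₀, hs₀1, hs₀2⟩
  have hEbdd : BddBelow E := ⟨t₀, fun s hs => hs.1.1⟩
  set tb : ℝ := sInf E with htb_def
  clear_value tb
  have htbE : tb ∈ E := htb_def ▸ hEclosed.csInf_mem hEne hEbdd
  have htb0 : t₀ ≤ tb := htbE.1.1
  have htbT : tb ≤ T := htbE.1.2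
  have htble : u tb ≤ 0.15 := htbE.2
  have hbefore : ∀ s, t₀ ≤ s → s < tb → 0.15 < u s := by
    intro s hs hstb
    by_contra hle
    push_neg at hle
    have : s ∈ E := ⟨⟨hs, le_trans hstb.le htbT⟩, hle⟩
    exact absurd (htb_def ▸ csInf_le hEbdd this) (not_le.mpr hstb)
  have htbgt : t₀ < tb := by
    rcases eq_or_lt_of_le htb0 with h | h
    · exact absurd (h ▸ htble) (not_le.mpr hstart1)
    · exact h
  have htbge : 0.15 ≤ u tb := by
    have htend : Filter.Tendsto u (nhdsWithin tb (Set.Iio tb)) (nhds (u tb)) :=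
      (hcont tb htb0).continuousWithinAt
    refine ge_of_tendsto htend ?_
    refine Filter.eventually_of_mem (Ico_mem_nhdsLT_of_mem ⟨htbgt, le_refl tb⟩) ?_
    intro x hx
    exact (hbefore x hx.1 hx.2).le
  have htbeq : u tb = 0.15 := le_antisymm htble htbge
  refine ⟨tb, htb0, htbT, htbeq, ?_⟩
  apply strictAntiOn_of_deriv_neg (convex_Icc _ _)
  · exact fun s hs => (hcont s hs.1).continuousWithinAt
  · intro s hs
    rw [interior_Icc] at hs
    have hs0 : t₀ ≤ s := hs.1.le
    have hmem : u s ∈ Set.Icc 0.15 ucri :=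
      ⟨(hbefore s hs0 hs.2).le, hinv s hs0⟩
    rw [(hode s hs0).deriv]
    exact hderiv_neg s hs0 hmem
end
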